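/- In the path coalgebra kQ^c of a quiver Q, for any two vertices s, t the space of (e_s, e_t)-primitive elements equals k(e_s − e_t) ⊕ k(Q_1)_{s,t}, the span of e_s − e_t together with the arrows from s to t. In particular, for s = t the primitive space equals the span of the loops at s. -/

import Mathlib

open Quiver TensorProduct

universe uv uq
variable {V : Type uv} [Quiver.{uq+1} V]

/-- All splittings of a path `p : a ⟶ b` into a pair of composable paths. -/
def pathDecomps : ∀ {a b : V}, Path a b → List ((c : V) × Path a c × Path c b)
  | a, _, .nil => [⟨a, .nil, .nil⟩]
  | _, b, .cons p e =>
      ⟨b, (p.cons e), .nil⟩ :: (pathDecomps p).map (fun x => ⟨x.1, x.2.1, x.2.2.cons e⟩)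

/-- A realization of the path coalgebra of a quiver `V` over `k` on a coalgebra `C`. -/
structure PathCoalgebraOn (k : Type*) (V : Type uv) [CommRing k] [Quiver.{uq+1} V]
    (C : Type*) [AddCommGroup C] [Module k C] [Coalgebra k C] where
  pathElem : ∀ {a b : V}, Path a b → C
  linearIndependent :
    LinearIndependent k (fun p : (Σ a b : V, Path a b) => pathElem p.2.2)
  span_top :
    Submodule.span k (Set.range (fun p : (Σ a b : V, Path a b) => pathElem p.2.2)) = ⊤
  comul_path : ∀ {a b : V} (p : Path a b),
    Coalgebra.comul (R := k) (pathElem p) =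
      ((pathDecomps p).map (fun x => pathElem x.2.1 ⊗ₜ[k] pathElem x.2.2)).sum
  counit_nil : ∀ a : V, Coalgebra.counit (R := k) (pathElem (.nil : Path a a)) = 1
  counit_pos : ∀ {a b : V} (p : Path a b), p.length ≠ 0 →
    Coalgebra.counit (R := k) (pathElem p) = 0

lemma decomps_comp : ∀ {a b : V} (p : Path a b), ∀ x ∈ pathDecomps p, x.2.1.comp x.2.2 = p
  | a, _, .nil, x, hx => by
    simp [pathDecomps] at hx; subst hx; rfl
  | _, b, .cons p e, x, hx => by
    simp only [pathDecomps, List.mem_cons, List.mem_map] at hx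
    rcases hx with rfl | ⟨y, hy, rfl⟩
    · rfl
    · have := decomps_comp p y hy
      simp [Quiver.Path.comp_cons, this]

lemma decomps_mem : ∀ {a c b : V} (q : Path a c) (r : Path c b),
    (⟨c, q, r⟩ : (c : V) × Path a c × Path c b) ∈ pathDecomps (q.comp r)
  | a, c, _, q, .nil => by
    cases q <;> simp [pathDecomps, Quiver.Path.comp_nil]
  | a, c, b, q, .cons r e => by
    have := decomps_mem q r
    simp only [Quiver.Path.comp_cons, pathDecomps, List.mem_cons, List.mem_map]
    exact Or.inr ⟨⟨c, q, r⟩, this, rfl⟩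

lemma decomps_fst_length : ∀ {a b : V} (p : Path a b), ∀ x ∈ pathDecomps p,
    x.2.1.length ≤ p.length := by
  intro a b p x hx
  have := decomps_comp p x hx
  have : (x.2.1.comp x.2.2).length = p.length := by rw [this]
  rw [Quiver.Path.length_comp] at this
  omega

lemma decomps_nodup : ∀ {a b : V} (p : Path a b), (pathDecomps p).Nodup
  | a, _, .nil => by simp [pathDecomps]
  | _, b, .cons p e => by
    simp only [pathDecomps, List.nodup_cons]
    constructor
    · intro h
      rcases List.mem_map.mp h with ⟨y, hy, heq⟩
      have h1 := congrArg (fun x : (c : V) × Path _ c × Path c _ => x.2.1.length) heq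
      have h2 := decomps_fst_length p y hy
      simp [Quiver.Path.length_cons] at h1
      omega
    · refine (decomps_nodup p).map ?_
      intro x y hxy
      obtain ⟨x1, x2, x3⟩ := x
      obtain ⟨y1, y2, y3⟩ := y
      simp only [Sigma.mk.inj_iff] at hxy ⊢
      obtain ⟨rfl, h⟩ := hxy
      rw [heq_iff_eq, Prod.mk.injEq] at h
      obtain ⟨rfl, h2⟩ := h
      simpa using h2

lemma list_sum_ite {γ : Type*} {k : Type*} [Field k] :
    ∀ (L : List γ) (Q : γ → Prop) [DecidablePred Q],
    (∀ x ∈ L, ∀ y ∈ L, Q x → Q y → x = y) → L.Nodup →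
    (L.map fun x => if Q x then (1:k) else 0).sum = if ∃ x ∈ L, Q x then 1 else 0
  | [], Q, _, _, _ => by simp
  | h :: L, Q, _, huniq, hnd => by
    rw [List.nodup_cons] at hnd
    by_cases hQ : Q h
    · have hz : (L.map fun x => if Q x then (1:k) else 0) = L.map fun _ => 0 := by
        apply List.map_congr_left
        intro x hx
        rw [if_neg]
        intro hQx
        exact hnd.1 ((huniq x (List.mem_cons_of_mem _ hx) h List.mem_cons_self hQx hQ) ▸ hx)
      simp [hQ, hz]
    · have := list_sum_ite (k := k) L Q (fun x hx y hy => huniq x (List.mem_cons_of_mem _ hx) y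
        (List.mem_cons_of_mem _ hy)) hnd.2
      simp [hQ, this]

abbrev PIdx (V : Type uv) [Quiver.{uq+1} V] := Σ a b : V, Path a b

def MatchI (j l i : PIdx V) : Prop :=
  ∃ (c : V) (q : Path i.1 c) (r : Path c i.2.1),
    q.comp r = i.2.2 ∧ (⟨i.1, c, q⟩ : PIdx V) = j ∧ (⟨c, i.2.1, r⟩ : PIdx V) = l

lemma matchI_iff {a c b : V} (q : Path a c) (r : Path c b) (i : PIdx V) :
    MatchI ⟨a, c, q⟩ ⟨c, b, r⟩ i ↔ i = ⟨a, b, q.comp r⟩ := by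
  constructor
  · obtain ⟨i1, i2, i3⟩ := i
    rintro ⟨c', q', r', hcomp, hj, hl⟩
    obtain ⟨rfl, hj2⟩ := Sigma.mk.inj_iff.mp hj
    rw [heq_iff_eq] at hj2
    obtain ⟨rfl, hj3⟩ := Sigma.mk.inj_iff.mp hj2
    rw [heq_iff_eq] at hj3
    subst hj3
    obtain ⟨-, hl2⟩ := Sigma.mk.inj_iff.mp hl
    rw [heq_iff_eq] at hl2
    obtain ⟨rfl, hl3⟩ := Sigma.mk.inj_iff.mp hl2
    rw [heq_iff_eq] at hl3
    subst hl3
    rw [hcomp]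
  · rintro rfl
    exact ⟨c, q, r, rfl, rfl, rfl⟩

lemma matchI_mid {j l i : PIdx V} (h : MatchI j l i) : j.2.1 = l.1 := by
  obtain ⟨c, q, r, -, rfl, rfl⟩ := h
  rfl


section
variable {k : Type*} [Field k] {C : Type*} [AddCommGroup C] [Module k C] [Coalgebra k C]
  (P : PathCoalgebraOn k V C)

noncomputable def pcBasis : Module.Basis (PIdx V) k C :=
  Module.Basis.mk P.linearIndependent P.span_top.ge

lemma pcBasis_apply (i : PIdx V) : pcBasis P i = P.pathElem i.2.2 := Module.Basis.mk_apply _ _ _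

noncomputable def Fjl (j l : PIdx V) : (C ⊗[k] C) →ₗ[k] k :=
  (TensorProduct.lid k k).toLinearMap ∘ₗ
    TensorProduct.map ((pcBasis P).coord j) ((pcBasis P).coord l)

lemma Fjl_tmul (j l : PIdx V) (x y : C) :
    Fjl P j l (x ⊗ₜ[k] y) = (pcBasis P).coord j x * (pcBasis P).coord l y := by
  simp [Fjl, TensorProduct.lid_tmul, smul_eq_mul]

open scoped Classical in
lemma coord_pathElem (j i : PIdx V) :
    (pcBasis P).coord j (P.pathElem i.2.2) = if i = j then 1 else 0 := by
  rw [← pcBasis_apply]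
  simp [Module.Basis.coord_apply, Module.Basis.repr_self, Finsupp.single_apply]

open scoped Classical in
lemma Fjl_comul (j l : PIdx V) {a b : V} (p : Path a b) :
    Fjl P j l (Coalgebra.comul (R := k) (P.pathElem p)) =
      if MatchI j l ⟨a, b, p⟩ then 1 else 0 := by
  rw [P.comul_path, map_list_sum, List.map_map]
  have h1 : ((pathDecomps p).map (Fjl P j l ∘ fun x => P.pathElem x.2.1 ⊗ₜ[k] P.pathElem x.2.2))
      = (pathDecomps p).map (fun x => if ((⟨a, x.1, x.2.1⟩ : PIdx V) = j ∧
          (⟨x.1, b, x.2.2⟩ : PIdx V) = l) then (1:k) else 0) := by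
    apply List.map_congr_left
    intro x hx
    rw [Function.comp_apply, Fjl_tmul,
      coord_pathElem P j ⟨a, x.1, x.2.1⟩, coord_pathElem P l ⟨x.1, b, x.2.2⟩]
    split_ifs <;> simp_all
  rw [h1, list_sum_ite]
  · congr 1
    simp only [eq_iff_iff]
    constructor
    · rintro ⟨x, hx, rfl, rfl⟩
      exact ⟨x.1, x.2.1, x.2.2, decomps_comp p x hx, rfl, rfl⟩
    · rintro ⟨c, q, r, hcomp, rfl, rfl⟩
      have hcomp' : q.comp r = p := hcomp
      exact ⟨⟨c, q, r⟩, hcomp' ▸ decomps_mem q r, rfl, rfl⟩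
  · intro x hx y hy hqx hqy
    obtain ⟨x1, x2, x3⟩ := x
    obtain ⟨y1, y2, y3⟩ := y
    dsimp only at hqx hqy
    have e1 := hqx.1.trans hqy.1.symm
    have e2 := hqx.2.trans hqy.2.symm
    obtain ⟨-, e1'⟩ := Sigma.mk.inj_iff.mp e1
    rw [heq_iff_eq] at e1'
    obtain ⟨rfl, e1''⟩ := Sigma.mk.inj_iff.mp e1'
    rw [heq_iff_eq] at e1''
    subst e1''
    obtain ⟨-, e2'⟩ := Sigma.mk.inj_iff.mp e2
    rw [heq_iff_eq] at e2'
    obtain ⟨-, e2''⟩ := Sigma.mk.inj_iff.mp e2'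
    rw [heq_iff_eq] at e2''
    subst e2''
    rfl
  · exact decomps_nodup p

open scoped Classical in
lemma main_eq {s t : V} {α : C}
    (hα : Coalgebra.comul (R := k) α = P.pathElem (.nil : Path s s) ⊗ₜ[k] α +
      α ⊗ₜ[k] P.pathElem (.nil : Path t t)) (j l : PIdx V) :
    (((pcBasis P).repr α).sum fun i d => d * (if MatchI j l i then 1 else 0)) =
      (if (⟨s, s, Path.nil⟩ : PIdx V) = j then 1 else 0) * ((pcBasis P).repr α) l +
      ((pcBasis P).repr α) j * (if (⟨t, t, Path.nil⟩ : PIdx V) = l then 1 else 0) := by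
  have hC := congrArg (Fjl P j l) hα
  rw [map_add, Fjl_tmul, Fjl_tmul,
    coord_pathElem P j ⟨s, s, Path.nil⟩, coord_pathElem P l ⟨t, t, Path.nil⟩,
    Module.Basis.coord_apply, Module.Basis.coord_apply] at hC
  have hL : Fjl P j l (Coalgebra.comul (R := k) α) =
      ((pcBasis P).repr α).sum fun i d => d * (if MatchI j l i then 1 else 0) := by
    conv_lhs => rw [← (pcBasis P).linearCombination_repr α]
    rw [Finsupp.linearCombination_apply, map_finsuppSum, map_finsuppSum]
    apply Finsupp.sum_congr
    intro i _
    obtain ⟨a, b, p⟩ := i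
    rw [map_smul, map_smul, pcBasis_apply, smul_eq_mul]
    rw [Fjl_comul]
  rw [← hL, hC]

end

section
variable {k : Type*} [Field k] {C : Type*} [AddCommGroup C] [Module k C] [Coalgebra k C]
  (P : PathCoalgebraOn k V C)

open scoped Classical in
lemma sum_match {a c b : V} (q : Path a c) (r : Path c b) (co : PIdx V →₀ k) :
    (co.sum fun i d => d * (if MatchI (⟨a, c, q⟩ : PIdx V) (⟨c, b, r⟩ : PIdx V) i
      then (1:k) else 0)) = co ⟨a, b, q.comp r⟩ := by
  have h1 : (co.sum fun i d => d * (if MatchI (⟨a, c, q⟩ : PIdx V) (⟨c, b, r⟩ : PIdx V) i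
      then (1:k) else 0)) = co.sum fun i d => if i = (⟨a, b, q.comp r⟩ : PIdx V) then d else 0 :=
    Finsupp.sum_congr fun i _ => by
      rw [matchI_iff]
      split_ifs <;> simp
  rw [h1, Finsupp.sum_ite_eq']
  split_ifs with h
  · rfl
  · exact (Finsupp.notMem_support_iff.mp h).symm

open scoped Classical in
lemma sum_nomatch {j l : PIdx V} (h : j.2.1 ≠ l.1) (co : PIdx V →₀ k) :
    (co.sum fun i d => d * (if MatchI j l i then (1:k) else 0)) = 0 := by
  have h1 : (co.sum fun i d => d * (if MatchI j l i then (1:k) else 0)) =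
      co.sum fun _ _ => (0:k) :=
    Finsupp.sum_congr fun i _ => by
      rw [if_neg (fun hm => h (matchI_mid hm)), mul_zero]
  rw [h1, Finsupp.sum, Finset.sum_const_zero]

lemma ne_of_length {u a b : V} (p : Path a b) (h : p.length ≠ 0) :
    (⟨u, u, Path.nil⟩ : PIdx V) ≠ ⟨a, b, p⟩ := by
  intro hcon
  have h2 := congrArg (fun i : PIdx V => i.2.2.length) hcon
  simp only [Quiver.Path.length_nil] at h2
  omega

lemma nilne {u a : V} (h : u ≠ a) :
    (⟨u, u, Path.nil⟩ : PIdx V) ≠ ⟨a, a, Path.nil⟩ :=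
  fun hcon => h (congrArg (fun i : PIdx V => i.1) hcon)

open scoped Classical in
lemma claim_len2 {s t : V} {α : C}
    (hα : Coalgebra.comul (R := k) α = P.pathElem (.nil : Path s s) ⊗ₜ[k] α +
      α ⊗ₜ[k] P.pathElem (.nil : Path t t))
    {a b : V} (p : Path a b) (hp : 2 ≤ p.length) : (pcBasis P).repr α ⟨a, b, p⟩ = 0 := by
  cases p with
  | nil => simp [Quiver.Path.length_nil] at hp
  | cons p' e =>
    rw [Quiver.Path.length_cons] at hp
    have h := main_eq P hα ⟨a, _, p'⟩ ⟨_, b, e.toPath⟩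
    rw [sum_match] at h
    rw [if_neg, if_neg, zero_mul, mul_zero, add_zero] at h
    · exact h
    · exact ne_of_length _ (by simp [Quiver.Hom.toPath])
    · intro hcon
      have h2 := congrArg (fun i : PIdx V => i.2.2.length) hcon
      simp only [Quiver.Path.length_nil] at h2
      omega

open scoped Classical in
lemma claim_arrowA {s t : V} {α : C}
    (hα : Coalgebra.comul (R := k) α = P.pathElem (.nil : Path s s) ⊗ₜ[k] α +
      α ⊗ₜ[k] P.pathElem (.nil : Path t t))
    {a b : V} (e : a ⟶ b) (ha : s ≠ a) : (pcBasis P).repr α ⟨a, b, Path.nil.cons e⟩ = 0 := by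
  have h := main_eq P hα ⟨a, a, Path.nil⟩ ⟨a, b, Path.nil.cons e⟩
  rw [sum_match] at h
  rw [if_neg (nilne ha), if_neg (ne_of_length _ (by simp)), zero_mul, mul_zero, add_zero] at h
  exact h

open scoped Classical in
lemma claim_arrowB {s t : V} {α : C}
    (hα : Coalgebra.comul (R := k) α = P.pathElem (.nil : Path s s) ⊗ₜ[k] α +
      α ⊗ₜ[k] P.pathElem (.nil : Path t t))
    {a b : V} (e : a ⟶ b) (hb : t ≠ b) : (pcBasis P).repr α ⟨a, b, Path.nil.cons e⟩ = 0 := by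
  have h := main_eq P hα ⟨a, b, Path.nil.cons e⟩ ⟨b, b, Path.nil⟩
  rw [sum_match] at h
  rw [if_neg (ne_of_length _ (by simp)), if_neg (nilne hb), zero_mul, mul_zero, add_zero] at h
  exact h

open scoped Classical in
lemma claim_nil {s t : V} {α : C}
    (hα : Coalgebra.comul (R := k) α = P.pathElem (.nil : Path s s) ⊗ₜ[k] α +
      α ⊗ₜ[k] P.pathElem (.nil : Path t t)) (a : V) :
    (pcBasis P).repr α ⟨a, a, Path.nil⟩ =
      (if (⟨s, s, Path.nil⟩ : PIdx V) = ⟨a, a, Path.nil⟩ then (1:k) else 0) *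
        (pcBasis P).repr α ⟨a, a, Path.nil⟩ +
      (pcBasis P).repr α ⟨a, a, Path.nil⟩ *
        (if (⟨t, t, Path.nil⟩ : PIdx V) = ⟨a, a, Path.nil⟩ then (1:k) else 0) := by
  have h := main_eq P hα ⟨a, a, Path.nil⟩ ⟨a, a, Path.nil⟩
  rw [sum_match] at h
  exact h

open scoped Classical in
lemma claim_cross {s t : V} {α : C}
    (hα : Coalgebra.comul (R := k) α = P.pathElem (.nil : Path s s) ⊗ₜ[k] α +
      α ⊗ₜ[k] P.pathElem (.nil : Path t t)) (hst : s ≠ t) :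
    (pcBasis P).repr α ⟨t, t, Path.nil⟩ + (pcBasis P).repr α ⟨s, s, Path.nil⟩ = 0 := by
  have h := main_eq P hα ⟨s, s, Path.nil⟩ ⟨t, t, Path.nil⟩
  rw [sum_nomatch (by exact hst)] at h
  rw [if_pos rfl, if_pos rfl, one_mul, mul_one] at h
  linear_combination -h
end

section
variable {k : Type*} [Field k] {C : Type*} [AddCommGroup C] [Module k C] [Coalgebra k C]
  (P : PathCoalgebraOn k V C)

open scoped Classical in
lemma forward (s t : V) (α : C)
    (hα : Coalgebra.comul (R := k) α = P.pathElem (.nil : Path s s) ⊗ₜ[k] α +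
      α ⊗ₜ[k] P.pathElem (.nil : Path t t)) :
    α ∈ Submodule.span k
      (insert (P.pathElem (.nil : Path s s) - P.pathElem (.nil : Path t t))
        (Set.range fun f : s ⟶ t => P.pathElem f.toPath)) := by
  classical
  set d := (pcBasis P).repr α ⟨s, s, Path.nil⟩ with hd
  set β := α - d • (P.pathElem (.nil : Path s s) - P.pathElem (.nil : Path t t)) with hβ
  have h1 : P.pathElem (.nil : Path s s) = pcBasis P ⟨s, s, Path.nil⟩ :=
    (pcBasis_apply P ⟨s, s, Path.nil⟩).symm
  have h2 : P.pathElem (.nil : Path t t) = pcBasis P ⟨t, t, Path.nil⟩ :=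
    (pcBasis_apply P ⟨t, t, Path.nil⟩).symm
  have hreprβ : (pcBasis P).repr β = (pcBasis P).repr α -
      d • (Finsupp.single (⟨s, s, Path.nil⟩ : PIdx V) (1:k) -
        Finsupp.single (⟨t, t, Path.nil⟩ : PIdx V) (1:k)) := by
    rw [hβ, map_sub, map_smul, map_sub, h1, h2, Module.Basis.repr_self, Module.Basis.repr_self]
  have hsupp : ↑((pcBasis P).repr β).support ⊆
      (Set.range fun f : s ⟶ t => (⟨s, t, f.toPath⟩ : PIdx V)) := by
    intro i hi
    rw [Finset.mem_coe, Finsupp.mem_support_iff, hreprβ] at hi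
    obtain ⟨a, b, p⟩ := i
    rw [Finsupp.sub_apply, Finsupp.smul_apply, Finsupp.sub_apply, smul_eq_mul,
      Finsupp.single_apply, Finsupp.single_apply] at hi
    cases p with
    | nil =>
      exfalso
      apply hi
      by_cases has : s = a
      · subst has
        by_cases hat : t = s
        · subst hat
          rw [if_pos rfl, sub_self, mul_zero, sub_zero]
          have hv := claim_nil P hα t
          rw [if_pos rfl, one_mul, mul_one] at hv
          linear_combination -hv
        · rw [if_pos rfl, if_neg (nilne hat), sub_zero, mul_one, ← hd, sub_self]
      · by_cases hat : t = a
        · subst hat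
          rw [if_neg (nilne has), if_pos rfl, zero_sub, mul_neg, mul_one, sub_neg_eq_add]
          exact claim_cross P hα has
        · rw [if_neg (nilne has), if_neg (nilne hat), sub_self, mul_zero, sub_zero]
          have hv := claim_nil P hα a
          rw [if_neg (nilne has), if_neg (nilne hat), zero_mul, mul_zero, add_zero] at hv
          exact hv
    | cons p' e =>
      rw [if_neg (ne_of_length _ (by simp)), if_neg (ne_of_length _ (by simp)),
        sub_self, mul_zero, sub_zero] at hi
      rcases Nat.eq_zero_or_pos p'.length with h0 | hpos
      · obtain rfl := Quiver.Path.eq_of_length_zero p' h0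
        obtain rfl := Quiver.Path.eq_nil_of_length_zero p' h0
        by_cases has : a = s
        · subst has
          by_cases hbt : b = t
          · subst hbt
            exact ⟨e, rfl⟩
          · exact absurd (claim_arrowB P hα e (fun hh => hbt hh.symm)) hi
        · exact absurd (claim_arrowA P hα e (fun hh => has hh.symm)) hi
      · refine absurd (claim_len2 P hα (p'.cons e) ?_) hi
        rw [Quiver.Path.length_cons]
        omega
  have hβmem : β ∈ Submodule.span k (Set.range fun f : s ⟶ t => P.pathElem f.toPath) := by
    have hm := Module.Basis.mem_span_repr_support (pcBasis P) β
    have hsub : (⇑(pcBasis P) '' ↑((pcBasis P).repr β).support) ⊆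
        Set.range fun f : s ⟶ t => P.pathElem f.toPath := by
      rintro y ⟨i, hi, rfl⟩
      obtain ⟨f, rfl⟩ := hsupp hi
      exact ⟨f, (pcBasis_apply P ⟨s, t, f.toPath⟩).symm⟩
    exact Submodule.span_mono hsub hm
  have hsplit : α = d • (P.pathElem (.nil : Path s s) - P.pathElem (.nil : Path t t)) + β := by
    rw [hβ]; abel
  rw [hsplit]
  exact Submodule.add_mem _
    (Submodule.smul_mem _ _ (Submodule.subset_span (Set.mem_insert _ _)))
    (Submodule.span_mono (Set.subset_insert _ _) hβmem)

lemma backward (s t : V) (α : C)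
    (hmem : α ∈ Submodule.span k
      (insert (P.pathElem (.nil : Path s s) - P.pathElem (.nil : Path t t))
        (Set.range fun f : s ⟶ t => P.pathElem f.toPath))) :
    Coalgebra.comul (R := k) α = P.pathElem (.nil : Path s s) ⊗ₜ[k] α +
      α ⊗ₜ[k] P.pathElem (.nil : Path t t) := by
  have comul_nil : ∀ a : V, Coalgebra.comul (R := k) (P.pathElem (.nil : Path a a)) =
      P.pathElem (.nil : Path a a) ⊗ₜ[k] P.pathElem (.nil : Path a a) := by
    intro a
    rw [P.comul_path]
    simp [pathDecomps]
  have comul_arrow : ∀ {a b : V} (f : a ⟶ b),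
      Coalgebra.comul (R := k) (P.pathElem f.toPath) =
        P.pathElem f.toPath ⊗ₜ[k] P.pathElem (.nil : Path b b) +
        P.pathElem (.nil : Path a a) ⊗ₜ[k] P.pathElem f.toPath := by
    intro a b f
    rw [P.comul_path]
    simp [pathDecomps, Quiver.Hom.toPath]
  let L : C →ₗ[k] C ⊗[k] C :=
    Coalgebra.comul - ((TensorProduct.mk k C C) (P.pathElem (.nil : Path s s)) +
      (TensorProduct.mk k C C).flip (P.pathElem (.nil : Path t t)))
  have hL : ∀ x : C, L x = Coalgebra.comul (R := k) x -
      (P.pathElem (.nil : Path s s) ⊗ₜ[k] x + x ⊗ₜ[k] P.pathElem (.nil : Path t t)) :=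
    fun x => rfl
  have hker : Submodule.span k
      (insert (P.pathElem (.nil : Path s s) - P.pathElem (.nil : Path t t))
        (Set.range fun f : s ⟶ t => P.pathElem f.toPath)) ≤ LinearMap.ker L := by
    rw [Submodule.span_le]
    rintro x (rfl | ⟨f, rfl⟩)
    · rw [SetLike.mem_coe, LinearMap.mem_ker, hL, map_sub, comul_nil, comul_nil,
        TensorProduct.tmul_sub, TensorProduct.sub_tmul]
      abel
    · rw [SetLike.mem_coe, LinearMap.mem_ker, hL, comul_arrow]
      abel
  have hk := hker hmem
  rw [LinearMap.mem_ker, hL, sub_eq_zero] at hk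
  exact hk

open scoped Classical in
lemma disjointness (s t : V) (hst : s ≠ t) :
    Disjoint (Submodule.span k {P.pathElem (.nil : Path s s) - P.pathElem (.nil : Path t t)})
      (Submodule.span k (Set.range fun f : s ⟶ t => P.pathElem f.toPath)) := by
  rw [Submodule.disjoint_def]
  intro x hx1 hx2
  obtain ⟨dd, rfl⟩ := Submodule.mem_span_singleton.mp hx1
  have hker : Submodule.span k (Set.range fun f : s ⟶ t => P.pathElem f.toPath) ≤
      LinearMap.ker ((pcBasis P).coord ⟨s, s, Path.nil⟩) := by
    rw [Submodule.span_le]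
    rintro y ⟨f, rfl⟩
    rw [SetLike.mem_coe, LinearMap.mem_ker, coord_pathElem P _ ⟨s, t, f.toPath⟩, if_neg]
    intro hcon
    exact ne_of_length (u := s) f.toPath (by simp [Quiver.Hom.toPath]) hcon.symm
  have h0 := hker hx2
  rw [LinearMap.mem_ker, map_smul, smul_eq_mul] at h0
  have hcoord : (pcBasis P).coord ⟨s, s, Path.nil⟩
      (P.pathElem (.nil : Path s s) - P.pathElem (.nil : Path t t)) = 1 := by
    rw [map_sub, coord_pathElem P _ ⟨s, s, Path.nil⟩, coord_pathElem P _ ⟨t, t, Path.nil⟩,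
      if_pos rfl, if_neg (nilne (fun hh => hst hh.symm)), sub_zero]
  rw [hcoord, mul_one] at h0
  rw [h0, zero_smul]

end


/-- Taft–Wilson, part 2: in the path coalgebra `kQ^c`, for vertices `s, t`
the space of `(e_s, e_t)`-primitive elements is `k(e_s - e_t) ⊕ k(Q₁)_{s,t}`;
in particular for `s = t` it is the span of the loops at `s`. -/
theorem primitives_of_pathCoalgebra (k : Type*) [Field k]
    (C : Type*) [AddCommGroup C] [Module k C] [Coalgebra k C]
    (P : PathCoalgebraOn k V C) (s t : V) :
    ({α : C | Coalgebra.comul (R := k) α =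
        P.pathElem (.nil : Path s s) ⊗ₜ[k] α + α ⊗ₜ[k] P.pathElem (.nil : Path t t)} =
      ↑(Submodule.span k
        (insert (P.pathElem (.nil : Path s s) - P.pathElem (.nil : Path t t))
          (Set.range fun f : s ⟶ t => P.pathElem f.toPath)))) ∧
    (s ≠ t →
      Disjoint
        (Submodule.span k {P.pathElem (.nil : Path s s) - P.pathElem (.nil : Path t t)})
        (Submodule.span k (Set.range fun f : s ⟶ t => P.pathElem f.toPath))) ∧
    (∀ α : C, Coalgebra.comul (R := k) α =
        P.pathElem (.nil : Path s s) ⊗ₜ[k] α + α ⊗ₜ[k] P.pathElem (.nil : Path s s) →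
      α ∈ Submodule.span k (Set.range fun f : s ⟶ s => P.pathElem f.toPath)) := by
  refine ⟨?_, fun hst => disjointness P s t hst, ?_⟩
  · ext α
    simp only [Set.mem_setOf_eq, SetLike.mem_coe]
    exact ⟨forward P s t α, backward P s t α⟩
  · intro α hα
    have hm := forward P s s α hα
    rwa [sub_self, Submodule.span_insert_zero] at hm
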